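/- Let r₊, r₋, t ∈ ℂ be given by r₊ = (λ* - 2k₃bc)/D, r₋ = (λ* + 2k₃bc)/D, t = i·k₃(b²L²/a + ac²/L²)/D with D = i·k₃(b²L²/a - ac²/L²) - λ*, for real a>0, k₃>0, L>0, b, c, λ* and |bL²| ≠ |ac|. Setting R₊ = |r₊|², R₋ = |r₋|², T = |t|², the generalized conservation relation R₊·R₋ + 2T - T² = 1 holds. -/

import Mathlib

open Complex

noncomputable def Dden (a b c k3 L lam : ℝ) : ℂ :=
  Complex.I * (k3 : ℂ) * ((b ^ 2 * L ^ 2 / a - a * c ^ 2 / L ^ 2 : ℝ) : ℂ) - (lam : ℂ)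

noncomputable def tCoef (a b c k3 L lam : ℝ) : ℂ :=
  Complex.I * (k3 : ℂ) * ((b ^ 2 * L ^ 2 / a + a * c ^ 2 / L ^ 2 : ℝ) : ℂ) / Dden a b c k3 L lam

noncomputable def rPlus (a b c k3 L lam : ℝ) : ℂ :=
  ((lam - 2 * k3 * b * c : ℝ) : ℂ) / Dden a b c k3 L lam

noncomputable def rMinus (a b c k3 L lam : ℝ) : ℂ :=
  ((lam + 2 * k3 * b * c : ℝ) : ℂ) / Dden a b c k3 L lam

lemma key_alg (lam k3 b c x y : ℝ) (hx : x ^ 2 = y ^ 2 - 4 * b ^ 2 * c ^ 2)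
    (hd : lam ^ 2 + k3 ^ 2 * x ^ 2 ≠ 0) :
    (lam - 2 * k3 * b * c) ^ 2 / (lam ^ 2 + k3 ^ 2 * x ^ 2) *
        ((lam + 2 * k3 * b * c) ^ 2 / (lam ^ 2 + k3 ^ 2 * x ^ 2)) +
      2 * (k3 ^ 2 * y ^ 2 / (lam ^ 2 + k3 ^ 2 * x ^ 2)) -
      (k3 ^ 2 * y ^ 2 / (lam ^ 2 + k3 ^ 2 * x ^ 2)) ^ 2 = 1 := by
  field_simp
  rw [hx] at *
  ring

theorem stmt10 (a b c k3 L : ℝ) (ha : 0 < a) (hk3 : 0 < k3) (hL : 0 < L)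
    (hne1 : b * L ^ 2 ≠ a * c) (hne2 : b * L ^ 2 ≠ -(a * c)) :
    ∀ lam : ℝ,
      ‖rPlus a b c k3 L lam‖ ^ 2 * ‖rMinus a b c k3 L lam‖ ^ 2 +
        2 * ‖tCoef a b c k3 L lam‖ ^ 2 -
        (‖tCoef a b c k3 L lam‖ ^ 2) ^ 2 = 1 := by
  intro lam
  have ha' : a ≠ 0 := ha.ne'
  have hL' : L ≠ 0 := hL.ne'
  set X : ℝ := b ^ 2 * L ^ 2 / a - a * c ^ 2 / L ^ 2 with hX
  set Y : ℝ := b ^ 2 * L ^ 2 / a + a * c ^ 2 / L ^ 2 with hY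
  have hXne : X ≠ 0 := by
    have hfac : (b * L ^ 2 - a * c) * (b * L ^ 2 + a * c) ≠ 0 :=
      mul_ne_zero (sub_ne_zero.mpr hne1) (by intro h; exact hne2 (by linarith [h]))
    intro h
    rw [hX, sub_eq_zero, div_eq_div_iff ha' (by positivity)] at h
    exact hfac (by nlinarith [h])
  have hD2 : ‖Dden a b c k3 L lam‖ ^ 2 = lam ^ 2 + k3 ^ 2 * X ^ 2 := by
    rw [Complex.sq_norm, Complex.normSq_apply]
    simp only [Dden, Complex.sub_re, Complex.sub_im, Complex.mul_re, Complex.mul_im,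
      Complex.I_re, Complex.I_im, Complex.ofReal_re, Complex.ofReal_im, hX]
    ring
  have hD2pos : (0:ℝ) < lam ^ 2 + k3 ^ 2 * X ^ 2 := by
    have h1 : 0 < k3 ^ 2 * X ^ 2 := by positivity
    nlinarith [sq_nonneg lam]
  have hRp : ‖rPlus a b c k3 L lam‖ ^ 2 =
      (lam - 2 * k3 * b * c) ^ 2 / (lam ^ 2 + k3 ^ 2 * X ^ 2) := by
    rw [rPlus, norm_div, div_pow, hD2, Complex.sq_norm, Complex.normSq_ofReal]; ring
  have hRm : ‖rMinus a b c k3 L lam‖ ^ 2 =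
      (lam + 2 * k3 * b * c) ^ 2 / (lam ^ 2 + k3 ^ 2 * X ^ 2) := by
    rw [rMinus, norm_div, div_pow, hD2, Complex.sq_norm, Complex.normSq_ofReal]; ring
  have hT : ‖tCoef a b c k3 L lam‖ ^ 2 =
      k3 ^ 2 * Y ^ 2 / (lam ^ 2 + k3 ^ 2 * X ^ 2) := by
    rw [tCoef, norm_div, div_pow, hD2]
    congr 1
    rw [norm_mul, norm_mul, Complex.norm_I, Complex.norm_real, Complex.norm_real,
      Real.norm_eq_abs, Real.norm_eq_abs,
      abs_of_pos hk3, mul_pow, mul_pow, one_pow, one_mul, _root_.sq_abs, hY]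
  rw [hRp, hRm, hT]
  have hXY : X ^ 2 = Y ^ 2 - 4 * b ^ 2 * c ^ 2 := by
    rw [hX, hY]
    field_simp
    ring
  exact key_alg lam k3 b c X Y hXY hD2pos.ne'
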